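/- Let 𝔽 be a finite field of characteristic 2, let k = 𝔽((s)) be the field of formal Laurent series over 𝔽, and let L be a finite separable field extension of k. Let L' be a field extension of L containing an element σ with σ² = s (the image of s in L') such that L' = L(σ). Then every element of L is a square in L': for every α ∈ L there exists β ∈ L' with β² = α. -/

import Mathlib

open Finset

section Part1

variable {F : Type} [Field F] [Fintype F] [CharP F 2]

/-- Square root in a finite field of characteristic 2. -/
noncomputable def fsqrt (F : Type) [Field F] [Fintype F] [CharP F 2] (x : F) : F :=
  haveI : ExpChar F 2 := .prime Nat.prime_two
  (frobeniusEquiv F 2).symm x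

lemma fsqrt_sq (x : F) : fsqrt F x ^ 2 = x := by
  haveI : ExpChar F 2 := .prime Nat.prime_two
  have := (frobeniusEquiv F 2).apply_symm_apply x
  rwa [frobeniusEquiv_def] at this

lemma fsqrt_zero : fsqrt F 0 = 0 := by
  haveI : ExpChar F 2 := .prime Nat.prime_two
  exact map_zero (frobeniusEquiv F 2).symm.toRingHom

/-- Coefficients of the square of a Laurent series in characteristic 2. -/
lemma sq_coeff (x : LaurentSeries F) (n : ℤ) :
    (x ^ 2).coeff n = if 2 ∣ n then (x.coeff (n / 2)) ^ 2 else 0 := by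
  rw [sq, HahnSeries.coeff_mul]
  classical
  have hpwo := x.isPWO_support
  rw [← Finset.sum_filter_add_sum_filter_not
    (Finset.antidiagonal hpwo hpwo n) (fun ij => ij.1 = ij.2)]
  have hoff : ∑ ij ∈ (Finset.antidiagonal hpwo hpwo n).filter (fun ij => ¬ ij.1 = ij.2),
      x.coeff ij.1 * x.coeff ij.2 = 0 := by
    refine Finset.sum_involution (fun ij _ => ij.swap) ?_ ?_ ?_ ?_
    · intro a ha
      simp only [Prod.fst_swap, Prod.snd_swap]
      rw [mul_comm]
      exact CharTwo.add_self_eq_zero _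
    · intro a ha _
      simp only [Finset.mem_filter] at ha
      intro h
      apply ha.2
      have h1 := congrArg Prod.fst h
      simp only [Prod.fst_swap] at h1
      exact h1.symm
    · intro a ha
      simp only [Finset.mem_filter] at ha ⊢
      refine ⟨Finset.swap_mem_addAntidiagonal.mpr ha.1, ?_⟩
      simp only [Prod.fst_swap, Prod.snd_swap]
      exact fun h => ha.2 h.symm
    · intro a ha; exact Prod.swap_swap a
  rw [hoff, add_zero]
  by_cases h2 : (2 : ℤ) ∣ n
  · obtain ⟨g, hg⟩ := h2
    have hgn : n / 2 = g := by omega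
    have hsub : (Finset.antidiagonal hpwo hpwo n).filter (fun ij => ij.1 = ij.2) ⊆ {(g, g)} := by
      intro ij hij
      simp only [Finset.mem_filter, Finset.mem_addAntidiagonal] at hij
      simp only [Finset.mem_singleton, Prod.ext_iff]
      obtain ⟨⟨_, _, hsum⟩, hdiag⟩ := hij
      constructor <;> omega
    rw [if_pos ⟨g, hg⟩, hgn]
    rcases Finset.subset_singleton_iff.mp hsub with he | he
    · rw [he, Finset.sum_empty]
      have hg0 : x.coeff g = 0 := by
        by_contra hc
        have hmem : (g, g) ∈ (Finset.antidiagonal hpwo hpwo n).filter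
            (fun ij => ij.1 = ij.2) :=
          Finset.mem_filter.mpr ⟨Finset.mem_addAntidiagonal.mpr ⟨hc, hc, by omega⟩, rfl⟩
        rw [he] at hmem
        simp at hmem
      rw [hg0]
      ring
    · rw [he, Finset.sum_singleton, sq]
  · rw [if_neg h2]
    have : (Finset.antidiagonal hpwo hpwo n).filter (fun ij => ij.1 = ij.2) = ∅ := by
      rw [Finset.filter_eq_empty_iff]
      intro ij hij hdiag
      rw [Finset.mem_addAntidiagonal] at hij
      exact h2 ⟨ij.1, by omega⟩
    rw [this, Finset.sum_empty]

lemma isPWO_half_preimage {A : Set ℤ} (hA : A.IsPWO) (r : ℤ) :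
    ((fun g : ℤ => 2 * g + r) ⁻¹' A).IsPWO := by
  rw [Set.isPWO_iff_exists_monotone_subseq] at hA ⊢
  intro f hf
  obtain ⟨g, hg⟩ := hA (fun n => 2 * f n + r) hf
  exact ⟨g, fun m n hmn => by have := hg hmn; simp only [Function.comp] at this ⊢; omega⟩

/-- Extract the coefficients of `c` in arithmetic progression `2g + r`, taking square roots. -/
noncomputable def compress (c : LaurentSeries F) (r : ℤ) : LaurentSeries F where
  coeff g := fsqrt F (c.coeff (2 * g + r))
  isPWO_support' := by
    refine Set.IsPWO.mono (isPWO_half_preimage c.isPWO_support r) ?_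
    intro g hg
    simp only [Function.mem_support] at hg
    simp only [Set.mem_preimage, HahnSeries.mem_support]
    intro hc
    exact hg (by rw [hc, fsqrt_zero])

lemma laurent_decomp (c : LaurentSeries F) :
    ∃ u v : LaurentSeries F,
      u ^ 2 + HahnSeries.single (1 : ℤ) (1 : F) * v ^ 2 = c := by
  refine ⟨compress c 0, compress c 1, ?_⟩
  ext n
  rw [HahnSeries.coeff_add]
  have hsingle : (HahnSeries.single (1 : ℤ) (1 : F) * (compress c 1) ^ 2).coeff n
      = ((compress c 1) ^ 2).coeff (n - 1) := by
    have := HahnSeries.coeff_single_mul_add (r := (1 : F))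
      (x := (compress c 1) ^ 2) (a := n - 1) (b := (1 : ℤ))
    rw [show n - 1 + 1 = n by ring] at this
    rw [this, one_mul]
  rw [hsingle, sq_coeff, sq_coeff]
  rcases Int.even_or_odd n with ⟨g, hg⟩ | ⟨g, hg⟩
  · rw [if_pos ⟨g, by omega⟩, if_neg (by omega)]
    have : n / 2 = g := by omega
    rw [this, add_zero]
    show fsqrt F (c.coeff (2 * g + 0)) ^ 2 = c.coeff n
    rw [fsqrt_sq]
    congr 1
    omega
  · rw [if_neg (by omega), if_pos ⟨g, by omega⟩]
    have : (n - 1) / 2 = g := by omega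
    rw [this, zero_add]
    show fsqrt F (c.coeff (2 * g + 1)) ^ 2 = c.coeff n
    rw [fsqrt_sq]
    congr 1
    omega

end Part1


/-- Abstract key lemma: if `L/k` is separable, `char L = 2`, and every element of (the image
of) `k` is of the form `a² + s·b²`, then every element of `L` is of that form. -/
lemma key_decomp {k L : Type} [Field k] [Field L] [Algebra k L]
    [Algebra.IsSeparable k L] [CharP L 2] (s : L)
    (hs : ∀ c : k, ∃ a b : L, a ^ 2 + s * b ^ 2 = algebraMap k L c) :
    ∀ α : L, ∃ a b : L, a ^ 2 + s * b ^ 2 = α := by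
  classical
  intro α
  let K : IntermediateField k L :=
    { carrier := {x : L | ∃ a b : L, a ^ 2 + s * b ^ 2 = x}
      zero_mem' := ⟨0, 0, by ring⟩
      one_mem' := ⟨1, 0, by ring⟩
      add_mem' := by
        rintro x y ⟨a, b, rfl⟩ ⟨c, d, rfl⟩
        exact ⟨a + c, b + d, by rw [CharTwo.add_sq, CharTwo.add_sq]; ring⟩
      mul_mem' := by
        rintro x y ⟨a, b, rfl⟩ ⟨c, d, rfl⟩
        refine ⟨a * c + s * b * d, a * d + b * c, ?_⟩
        rw [CharTwo.add_sq, CharTwo.add_sq]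
        ring
      inv_mem' := by
        intro x hx
        obtain ⟨a, b, rfl⟩ := hx
        by_cases h0 : a ^ 2 + s * b ^ 2 = 0
        · rw [h0]
          exact ⟨0, 0, by simp⟩
        · refine ⟨a * (a ^ 2 + s * b ^ 2)⁻¹, b * (a ^ 2 + s * b ^ 2)⁻¹, ?_⟩
          field_simp
      algebraMap_mem' := hs }
  haveI : Algebra.IsSeparable K L :=
    Algebra.isSeparable_tower_top_of_isSeparable k K L
  haveI : CharP K 2 := (algebraMap K L).charP (algebraMap K L).injective 2
  haveI : ExpChar K 2 := .prime Nat.prime_two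
  haveI : IsPurelyInseparable K L := by
    rw [isPurelyInseparable_iff_pow_mem K 2]
    intro x
    refine ⟨1, ?_⟩
    rw [pow_one]
    have hx : x ^ 2 ∈ K := ⟨x, 0, by ring⟩
    exact ⟨⟨x ^ 2, hx⟩, rfl⟩
  obtain ⟨⟨γ, a, b, hab⟩, hγ⟩ :=
    IsPurelyInseparable.surjective_algebraMap_of_isSeparable K L α
  exact ⟨a, b, by rw [hab]; exact hγ⟩

set_option maxHeartbeats 1000000 in
/-- Let `𝔽` be a finite field of characteristic `2`, `k = 𝔽((s))`,
`L/k` a finite separable extension, and `L' = L(σ)` with `σ² = s`.  Then every element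
of `L` is a square in `L'`. -/
theorem laurent_sqrt_extension {F : Type} [Field F] [Fintype F] [CharP F 2]
    {L L' : Type} [Field L] [Field L']
    [Algebra (LaurentSeries F) L] [FiniteDimensional (LaurentSeries F) L]
    [Algebra.IsSeparable (LaurentSeries F) L]
    [Algebra L L'] [Algebra (LaurentSeries F) L'] [IsScalarTower (LaurentSeries F) L L']
    (σ : L')
    (hσ : σ ^ 2 = algebraMap (LaurentSeries F) L' (HahnSeries.single (1 : ℤ) (1 : F)))
    (hgen : Algebra.adjoin L {σ} = ⊤) :
    ∀ α : L, ∃ β : L', β ^ 2 = algebraMap L L' α := by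
  classical
  intro α
  haveI : CharP (LaurentSeries F) 2 :=
    charP_of_injective_ringHom (f := (HahnSeries.C : F →+* LaurentSeries F))
      HahnSeries.C_injective 2
  haveI : CharP L 2 := charP_of_injective_algebraMap
    (algebraMap (LaurentSeries F) L).injective 2
  haveI : CharP L' 2 := charP_of_injective_algebraMap (algebraMap L L').injective 2
  set s : L := algebraMap (LaurentSeries F) L (HahnSeries.single (1 : ℤ) (1 : F)) with hs_def
  have hbase : ∀ c : LaurentSeries F,
      ∃ a b : L, a ^ 2 + s * b ^ 2 = algebraMap (LaurentSeries F) L c := by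
    intro c
    obtain ⟨u, v, huv⟩ := laurent_decomp c
    refine ⟨algebraMap (LaurentSeries F) L u, algebraMap (LaurentSeries F) L v, ?_⟩
    rw [← map_pow, ← map_pow, hs_def, ← map_mul, ← map_add, huv]
  obtain ⟨a, b, hαab⟩ := key_decomp s hbase α
  refine ⟨algebraMap L L' a + algebraMap L L' b * σ, ?_⟩
  rw [CharTwo.add_sq, mul_pow, hσ,
    IsScalarTower.algebraMap_apply (LaurentSeries F) L L', ← hs_def,
    ← map_pow, ← map_pow, ← map_mul, ← map_add, ← hαab]
  congr 1
  ring
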